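/- Let K be an algebraically closed field, k ≥ 1, and let X = (V₁, V₂, α, β, η) be a finite-dimensional Γ_con-module. The following are equivalent: (i) the only morphism of representations M₁ → X is zero; (ii) the only morphism of representations X → M₂ is zero; (iii) V₁ = 0, i.e. X is filtered by the simple S₂ alone. -/

import Mathlib

/-- A finite-dimensional module over the contraction algebra `Γ_con` (the path algebra of
the quiver with two vertices, arrows `a : 1 → 2`, `b : 2 → 1` and a loop `y` at vertex `2`,
modulo `y^k = ba`, `ay = 0`, `yb = 0`), given concretely as a representation
`(V₁, V₂, α, β, η)` with `α ∘ β = η^k`, `η ∘ α = 0` and `β ∘ η = 0`. -/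
structure GamRep (K : Type) [Field K] (k : ℕ) : Type 1 where
  V1 : Type
  V2 : Type
  [acg1 : AddCommGroup V1]
  [acg2 : AddCommGroup V2]
  [mod1 : Module K V1]
  [mod2 : Module K V2]
  [fd1 : FiniteDimensional K V1]
  [fd2 : FiniteDimensional K V2]
  α : V1 →ₗ[K] V2
  β : V2 →ₗ[K] V1
  η : V2 →ₗ[K] V2
  rel1 : α ∘ₗ β = η ^ k
  rel2 : η ∘ₗ α = 0
  rel3 : β ∘ₗ η = 0

attribute [instance] GamRep.acg1 GamRep.acg2 GamRep.mod1 GamRep.mod2 GamRep.fd1 GamRep.fd2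

namespace GamRep

variable {K : Type} [Field K] {k : ℕ}

/-- A morphism of `Γ_con`-modules is a pair of linear maps commuting with the three
structure maps. -/
def IsHom (M N : GamRep K k) (φ1 : M.V1 →ₗ[K] N.V1) (φ2 : M.V2 →ₗ[K] N.V2) : Prop :=
  φ2 ∘ₗ M.α = N.α ∘ₗ φ1 ∧ φ1 ∘ₗ M.β = N.β ∘ₗ φ2 ∧ φ2 ∘ₗ M.η = N.η ∘ₗ φ2

/-- An isomorphism of `Γ_con`-modules is a pair of linear isomorphisms commuting with the
structure maps. -/
def Iso (M N : GamRep K k) : Prop :=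
  ∃ (φ1 : M.V1 ≃ₗ[K] N.V1) (φ2 : M.V2 ≃ₗ[K] N.V2),
    M.IsHom N (φ1 : M.V1 →ₗ[K] N.V1) (φ2 : M.V2 →ₗ[K] N.V2)

/-- The zero representation: both underlying vector spaces are trivial. -/
def IsZero (M : GamRep K k) : Prop := Subsingleton M.V1 ∧ Subsingleton M.V2

theorem prodMap_pow {V W : Type} [AddCommGroup V] [Module K V] [AddCommGroup W] [Module K W]
    (f : V →ₗ[K] V) (g : W →ₗ[K] W) (n : ℕ) :
    (f.prodMap g) ^ n = (f ^ n).prodMap (g ^ n) := by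
  induction n with
  | zero => ext <;> simp
  | succ n ih => rw [pow_succ, pow_succ, pow_succ, ih, LinearMap.prodMap_mul]

/-- The direct sum of two representations, taken componentwise. -/
def dsum (M N : GamRep K k) : GamRep K k where
  V1 := M.V1 × N.V1
  V2 := M.V2 × N.V2
  α := M.α.prodMap N.α
  β := M.β.prodMap N.β
  η := M.η.prodMap N.η
  rel1 := by
    rw [show (M.α.prodMap N.α) ∘ₗ (M.β.prodMap N.β) = (M.α ∘ₗ M.β).prodMap (N.α ∘ₗ N.β) from
      LinearMap.prodMap_comp _ _ _ _, M.rel1, N.rel1, prodMap_pow]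
  rel2 := by
    rw [show (M.η.prodMap N.η) ∘ₗ (M.α.prodMap N.α) = (M.η ∘ₗ M.α).prodMap (N.η ∘ₗ N.α) from
      LinearMap.prodMap_comp _ _ _ _, M.rel2, N.rel2, LinearMap.prodMap_zero]
  rel3 := by
    rw [show (M.β.prodMap N.β) ∘ₗ (M.η.prodMap N.η) = (M.β ∘ₗ M.η).prodMap (N.β ∘ₗ N.η) from
      LinearMap.prodMap_comp _ _ _ _, M.rel3, N.rel3, LinearMap.prodMap_zero]

/-- A representation is indecomposable if it is nonzero and not isomorphic to a direct sum
of two nonzero representations. -/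
def Indecomposable (M : GamRep K k) : Prop :=
  ¬ M.IsZero ∧ ∀ N P : GamRep K k, M.Iso (N.dsum P) → N.IsZero ∨ P.IsZero

/-- The endomorphism space of a representation, as a `K`-subspace of the product of the two
spaces of linear endomorphisms. -/
def endSpace (M : GamRep K k) :
    Submodule K ((M.V1 →ₗ[K] M.V1) × (M.V2 →ₗ[K] M.V2)) where
  carrier := {φ | M.IsHom M φ.1 φ.2}
  zero_mem' := by
    refine ⟨?_, ?_, ?_⟩ <;> simp [LinearMap.zero_comp, LinearMap.comp_zero]
  add_mem' := by
    rintro φ ψ ⟨h1, h2, h3⟩ ⟨h4, h5, h6⟩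
    refine ⟨?_, ?_, ?_⟩
    · simp only [Prod.fst_add, Prod.snd_add, LinearMap.add_comp, LinearMap.comp_add, h1, h4]
    · simp only [Prod.fst_add, Prod.snd_add, LinearMap.add_comp, LinearMap.comp_add, h2, h5]
    · simp only [Prod.fst_add, Prod.snd_add, LinearMap.add_comp, LinearMap.comp_add, h3, h6]
  smul_mem' := by
    rintro c φ ⟨h1, h2, h3⟩
    refine ⟨?_, ?_, ?_⟩
    · simp only [Prod.smul_fst, Prod.smul_snd, LinearMap.smul_comp, LinearMap.comp_smul, h1]
    · simp only [Prod.smul_fst, Prod.smul_snd, LinearMap.smul_comp, LinearMap.comp_smul, h2]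
    · simp only [Prod.smul_fst, Prod.smul_snd, LinearMap.smul_comp, LinearMap.comp_smul, h3]

variable (K)

/-- The simple module `S₁ = (K, 0)` with all structure maps zero (a representation whenever
`k ≥ 1`). -/
def S1 (hk : 1 ≤ k) : GamRep K k where
  V1 := K
  V2 := PUnit
  α := 0
  β := 0
  η := 0
  rel1 := by rw [LinearMap.zero_comp, zero_pow (Nat.one_le_iff_ne_zero.mp hk)]
  rel2 := by rw [LinearMap.comp_zero]
  rel3 := by rw [LinearMap.comp_zero]

/-- The simple module `S₂ = (0, K)` with all structure maps zero (a representation whenever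
`k ≥ 1`). -/
def S2 (hk : 1 ≤ k) : GamRep K k where
  V1 := PUnit
  V2 := K
  α := 0
  β := 0
  η := 0
  rel1 := by rw [LinearMap.zero_comp, zero_pow (Nat.one_le_iff_ne_zero.mp hk)]
  rel2 := by rw [LinearMap.comp_zero]
  rel3 := by rw [LinearMap.comp_zero]

/-- The module `M₁ = (K, K, α = id, β = 0, η = 0)` (a representation whenever `k ≥ 1`). -/
def M1 (hk : 1 ≤ k) : GamRep K k where
  V1 := K
  V2 := K
  α := LinearMap.id
  β := 0
  η := 0
  rel1 := by rw [LinearMap.comp_zero, zero_pow (Nat.one_le_iff_ne_zero.mp hk)]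
  rel2 := by rw [LinearMap.zero_comp]
  rel3 := by rw [LinearMap.comp_zero]

/-- The module `M₂ = (K, K, α = 0, β = id, η = 0)` (a representation whenever `k ≥ 1`). -/
def M2 (hk : 1 ≤ k) : GamRep K k where
  V1 := K
  V2 := K
  α := 0
  β := LinearMap.id
  η := 0
  rel1 := by rw [LinearMap.zero_comp, zero_pow (Nat.one_le_iff_ne_zero.mp hk)]
  rel2 := by rw [LinearMap.comp_zero]
  rel3 := by rw [LinearMap.comp_zero]

end GamRep

/-- For a finite-dimensional `Γ_con`-module `X = (V₁, V₂, α, β, η)` the following are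
equivalent: (i) the only morphism `M₁ → X` is zero; (ii) the only morphism `X → M₂` is
zero; (iii) `V₁ = 0`, i.e. `X` is filtered by the simple `S₂` alone. -/
theorem gam_orthogonality_to_M1_M2 (K : Type) [Field K] [IsAlgClosed K] (k : ℕ) (hk : 1 ≤ k)
    (X : GamRep K k) :
    ((∀ (φ1 : K →ₗ[K] X.V1) (φ2 : K →ₗ[K] X.V2),
        (GamRep.M1 K hk).IsHom X φ1 φ2 → φ1 = 0 ∧ φ2 = 0) ↔ Subsingleton X.V1) ∧
    ((∀ (φ1 : X.V1 →ₗ[K] K) (φ2 : X.V2 →ₗ[K] K),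
        X.IsHom (GamRep.M2 K hk) φ1 φ2 → φ1 = 0 ∧ φ2 = 0) ↔ Subsingleton X.V1) := by
  obtain ⟨m, rfl⟩ : ∃ m, k = m + 1 := ⟨k - 1, (Nat.succ_pred_eq_of_pos hk).symm⟩
  set f : X.V1 →ₗ[K] X.V1 := X.β ∘ₗ X.α with hf
  have hαf : X.α ∘ₗ f = 0 := by
    have h1 : X.α ∘ₗ f = (X.η ^ (m + 1)) ∘ₗ X.α := by
      rw [hf, ← LinearMap.comp_assoc, X.rel1]
    rw [h1, pow_succ, Module.End.mul_eq_comp, LinearMap.comp_assoc, X.rel2,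
      LinearMap.comp_zero]
  have main : Function.Injective f → Subsingleton X.V1 := by
    intro hinj
    have hsurj : Function.Surjective f := (LinearMap.injective_iff_surjective).mp hinj
    have hα0 : X.α = 0 := by
      ext v
      obtain ⟨w, rfl⟩ := hsurj v
      simpa using LinearMap.congr_fun hαf w
    have hf0 : f = 0 := by rw [hf, hα0, LinearMap.comp_zero]
    refine ⟨fun a b => hinj ?_⟩
    rw [hf0]; rfl
  constructor
  · constructor
    · intro H
      refine main ?_
      have hker : ∀ v, f v = 0 → v = 0 := by
        intro v hv
        set φ1 := LinearMap.toSpanSingleton K X.V1 v with hφ1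
        have := H φ1 (X.α ∘ₗ φ1) ⟨?_, ?_, ?_⟩
        · have h0 := LinearMap.congr_fun this.1 1
          simpa [hφ1] using h0
        · show (X.α ∘ₗ φ1) ∘ₗ (GamRep.M1 K hk).α = X.α ∘ₗ φ1
          simp [GamRep.M1]
          rfl
        · show φ1 ∘ₗ (GamRep.M1 K hk).β = X.β ∘ₗ (X.α ∘ₗ φ1)
          ext
          simp [GamRep.M1, hφ1]
          exact (show (LinearMap.toSpanSingleton K X.V1 v) 0 = X.β (X.α v) by simpa [hf] using hv.symm)
        · show (X.α ∘ₗ φ1) ∘ₗ (GamRep.M1 K hk).η = X.η ∘ₗ (X.α ∘ₗ φ1)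
          rw [← LinearMap.comp_assoc, X.rel2, LinearMap.zero_comp]
          exact LinearMap.ext fun x => show X.α (φ1 0) = 0 by rw [map_zero, map_zero]
      intro a b hab
      have := hker (a - b) (by rw [map_sub, hab, sub_self])
      exact sub_eq_zero.mp this
    · intro hs φ1 φ2 ⟨h1, h2, h3⟩
      have hφ1 : φ1 = 0 := LinearMap.ext fun x => Subsingleton.elim _ _
      refine ⟨hφ1, ?_⟩
      have := LinearMap.congr_fun h1 (1 : K)
      rw [hφ1] at this
      exact LinearMap.ext_ring (this.trans (map_zero X.α))
  · constructor
    · intro H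
      refine main ((LinearMap.injective_iff_surjective).mpr ?_)
      by_contra hns
      have hlt : LinearMap.range f < ⊤ := lt_top_iff_ne_top.mpr
        (fun h => hns (LinearMap.range_eq_top.mp h))
      obtain ⟨φ1, hφne, hφmap⟩ :=
        (LinearMap.range f).exists_dual_map_eq_bot_of_lt_top hlt inferInstance
      have hcomp : φ1 ∘ₗ f = 0 := by
        ext v
        have hmem : φ1 (f v) ∈ (LinearMap.range f).map φ1 :=
          Submodule.mem_map_of_mem (LinearMap.mem_range_self f v)
        rw [hφmap] at hmem
        simpa using hmem
      have := H φ1 (φ1 ∘ₗ X.β) ⟨?_, ?_, ?_⟩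
      · exact hφne this.1
      · ext v
        exact (show φ1 (X.β (X.α v)) = 0 by simpa [hf] using LinearMap.congr_fun hcomp v)
      · show φ1 ∘ₗ X.β = (GamRep.M2 K hk).β ∘ₗ (φ1 ∘ₗ X.β)
        simp [GamRep.M2]
        rfl
      · ext v
        exact (show φ1 (X.β (X.η v)) = 0 by simpa using congrArg φ1 (LinearMap.congr_fun X.rel3 v))
    · intro hs φ1 φ2 ⟨h1, h2, h3⟩
      have hφ1 : φ1 = 0 := LinearMap.ext fun x => by
        rw [Subsingleton.elim x 0, map_zero, LinearMap.zero_apply]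
      refine ⟨hφ1, ?_⟩
      have : φ2 = φ1 ∘ₗ X.β := by
        ext v; exact (show φ2 v = φ1 (X.β v) from (LinearMap.congr_fun h2 v).symm)
      rw [this, hφ1, LinearMap.zero_comp]
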